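/- For every n ≥ 4, the automorphism group of the Möbius ladder Mₙ is isomorphic to the dihedral group of order 4n (the dihedral group D_{2n} with 2n rotations and 2n reflections). -/

import Mathlib

/-- The automorphism group of a simple graph, as the subgroup of the
permutation group of its vertices consisting of adjacency-preserving permutations. -/
def SimpleGraph.autSubgroup {V : Type*} (G : SimpleGraph V) : Subgroup (Equiv.Perm V) where
  carrier := {σ | ∀ a b : V, G.Adj (σ a) (σ b) ↔ G.Adj a b}
  one_mem' := by intro a b; simp
  mul_mem' := by
    intro σ τ hσ hτ a b
    simpa [Equiv.Perm.mul_apply] using (hσ (τ a) (τ b)).trans (hτ a b)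
  inv_mem' := by
    intro σ hσ a b
    simpa using (hσ (σ⁻¹ a) (σ⁻¹ b)).symm

/-- The Möbius ladder with `n` rungs: vertices are `ZMod (2 * n)`, with distinct
vertices `i` and `j` adjacent iff `j - i ∈ {1, -1, n}`. -/
def mobiusLadder (n : ℕ) : SimpleGraph (ZMod (2 * n)) where
  Adj i j := i ≠ j ∧ (j - i = 1 ∨ j - i = -1 ∨ j - i = (n : ZMod (2 * n)))
  symm := by
    constructor
    intro i j ⟨hne, h⟩
    have hn : -(n : ZMod (2 * n)) = (n : ZMod (2 * n)) := by
      have h2 : ((n : ZMod (2 * n)) + n) = ((2 * n : ℕ) : ZMod (2 * n)) := by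
        push_cast; ring
      have h0 : ((n : ZMod (2 * n)) + n) = 0 := by rw [h2, ZMod.natCast_self]
      exact neg_eq_of_add_eq_zero_left h0
    refine ⟨hne.symm, ?_⟩
    have hij : i - j = -(j - i) := by ring
    rcases h with h | h | h
    · right; left; rw [hij, h]
    · left; rw [hij, h]; ring
    · right; right; rw [hij, h, hn]
  loopless := ⟨fun i h => h.1 rfl⟩

namespace MobiusAux

variable {n : ℕ}

/-- membership in the difference set -/
def D (n : ℕ) (x : ZMod (2*n)) : Prop := x = 1 ∨ x = -1 ∨ x = (n : ZMod (2*n))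

section Arith
variable (hn : 4 ≤ n)
include hn

omit hn in lemma cast_eq_zero_iff (k : ℕ) : ((k : ZMod (2*n)) = 0) ↔ 2*n ∣ k :=
  ZMod.natCast_eq_zero_iff k (2*n)

lemma cast_ne_zero {k : ℕ} (h1 : 0 < k) (h2 : k < 2*n) : (k : ZMod (2*n)) ≠ 0 := by
  intro h
  rw [cast_eq_zero_iff k] at h
  have := Nat.le_of_dvd h1 h; omega

lemma two_ne_zero' : (2 : ZMod (2*n)) ≠ 0 := by
  have := cast_ne_zero hn (k := 2) (by omega) (by omega); simpa using this

omit hn in lemma neg_n : -(n : ZMod (2*n)) = (n : ZMod (2*n)) := by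
  have h0 : ((n : ZMod (2*n)) + n) = 0 := by
    have : ((n : ZMod (2*n)) + n) = ((2*n : ℕ) : ZMod (2*n)) := by push_cast; ring
    rw [this, ZMod.natCast_self]
  exact neg_eq_of_add_eq_zero_left h0

lemma n_ne_zero : (n : ZMod (2*n)) ≠ 0 := cast_ne_zero hn (by omega) (by omega)

lemma n_add_one_ne_zero : (n : ZMod (2*n)) + 1 ≠ 0 := by
  have := cast_ne_zero hn (k := n+1) (by omega) (by omega); push_cast at this; exact this

lemma n_ne_one : (n : ZMod (2*n)) ≠ 1 := by
  intro h
  have : ((n : ℕ) : ZMod (2*n)) = ((1 : ℕ) : ZMod (2*n)) := by push_cast; exact h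
  rw [ZMod.natCast_eq_natCast_iff] at this
  have := Nat.ModEq.eq_of_lt_of_lt this (by omega) (by omega)
  omega

lemma n_ne_neg_one : (n : ZMod (2*n)) ≠ -1 := by
  intro h
  exact n_add_one_ne_zero hn (by rw [h]; ring)

lemma n_ne_three : (n : ZMod (2*n)) ≠ 3 := by
  intro h
  have : ((n : ℕ) : ZMod (2*n)) = ((3 : ℕ) : ZMod (2*n)) := by push_cast; exact h
  rw [ZMod.natCast_eq_natCast_iff] at this
  have := Nat.ModEq.eq_of_lt_of_lt this (by omega) (by omega)
  omega

lemma one_ne_neg_one : (1 : ZMod (2*n)) ≠ -1 := by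
  intro h
  exact two_ne_zero' hn (by linear_combination h)


lemma not_D_three : ¬ D n (3 : ZMod (2*n)) := by
  rintro (h | h | h)
  · exact two_ne_zero' hn (by rw [show (2:ZMod (2*n)) = 3 - 1 by ring, h]; ring)
  · have : (4 : ZMod (2*n)) = 0 := by rw [show (4:ZMod (2*n)) = 3 + 1 by ring, h]; ring
    have h4 := cast_ne_zero hn (k := 4) (by omega) (by omega)
    push_cast at h4; exact h4 this
  · exact n_ne_three hn h.symm

lemma not_D_n_add_two : ¬ D n ((n : ZMod (2*n)) + 2) := by
  rintro (h | h | h)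
  · exact n_add_one_ne_zero hn (by linear_combination h)
  · have : ((n+3 : ℕ) : ZMod (2*n)) = 0 := by push_cast; linear_combination h
    exact cast_ne_zero hn (by omega) (by omega) this
  · exact two_ne_zero' hn (by linear_combination h)

lemma not_D_n_sub_two : ¬ D n ((n : ZMod (2*n)) - 2) := by
  rintro (h | h | h)
  · exact n_ne_three hn (by linear_combination h)
  · exact n_ne_one hn (by linear_combination h)
  · exact two_ne_zero' hn (by linear_combination -h)

lemma D_neg {x : ZMod (2*n)} (h : D n x) : D n (-x) := by
  rcases h with h | h | h
  · right; left; rw [h]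
  · left; rw [h]; ring
  · right; right; rw [h, neg_n]

end Arith

section Graph
variable (hn : 4 ≤ n)
include hn

lemma one_ne_zero' : (1 : ZMod (2*n)) ≠ 0 := by
  have := cast_ne_zero hn (k := 1) (by omega) (by omega); simpa using this

lemma D_ne_zero {x : ZMod (2*n)} (h : D n x) : x ≠ 0 := by
  rcases h with h | h | h
  · rw [h]; exact one_ne_zero' hn
  · rw [h]; intro h0
    exact one_ne_zero' hn (by linear_combination -h0)
  · rw [h]; exact n_ne_zero hn

lemma adj_iff {a b : ZMod (2*n)} : (mobiusLadder n).Adj a b ↔ D n (b - a) := by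
  constructor
  · exact fun h => (h : a ≠ b ∧ D n (b - a)).2
  · intro h
    refine (⟨fun he => D_ne_zero hn h ?_, h⟩ : a ≠ b ∧ D n (b - a))
    rw [he]; ring

lemma D_neg_iff {x : ZMod (2*n)} : D n (-x) ↔ D n x := by
  constructor
  · intro h; simpa using D_neg hn h
  · exact D_neg hn

end Graph

/-- two distinct length-3 paths from `a` to `b` with interior avoiding `a`, `b`;
distinguishes rungs from cycle edges. -/
def Q (n : ℕ) (a b : ZMod (2*n)) : Prop :=
  ∃ c c' d d', c ≠ c' ∧ c ≠ b ∧ c' ≠ b ∧ d ≠ a ∧ d' ≠ a ∧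
    (mobiusLadder n).Adj a c ∧ (mobiusLadder n).Adj c d ∧ (mobiusLadder n).Adj d b ∧
    (mobiusLadder n).Adj a c' ∧ (mobiusLadder n).Adj c' d' ∧ (mobiusLadder n).Adj d' b

section Qlem
variable (hn : 4 ≤ n)
include hn

lemma Q_of_rung {a b : ZMod (2*n)} (h : b - a = (n : ZMod (2*n))) : Q n a b := by
  refine ⟨a + 1, a - 1, b + 1, b - 1, ?_, ?_, ?_, ?_, ?_, ?_, ?_, ?_, ?_, ?_, ?_⟩
  · intro he; exact two_ne_zero' hn (by linear_combination he)
  · intro he; exact n_ne_one hn (by linear_combination -h - he)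
  · intro he; exact n_ne_neg_one hn (by linear_combination -h - he)
  · intro he; exact n_ne_neg_one hn (by linear_combination -h + he)
  · intro he; exact n_ne_one hn (by linear_combination -h + he)
  · rw [adj_iff hn]; left; ring
  · rw [adj_iff hn]; right; right; linear_combination h
  · rw [adj_iff hn]; right; left; ring
  · rw [adj_iff hn]; right; left; ring
  · rw [adj_iff hn]; right; right; linear_combination h
  · rw [adj_iff hn]; left; ring

lemma not_Q_cycle (a : ZMod (2*n)) : ¬ Q n a (a + 1) := by
  rintro ⟨c, c', d, d', hcc', hcb, hc'b, hda, hd'a, h1, h2, h3, h4, h5, h6⟩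
  have key : ∀ c d : ZMod (2*n), c ≠ a + 1 → d ≠ a → (mobiusLadder n).Adj a c →
      (mobiusLadder n).Adj c d → (mobiusLadder n).Adj d (a + 1) → c = a + (n : ZMod (2*n)) := by
    intro c d hcb hda hac hcd hdb
    rw [adj_iff hn] at hac hcd hdb
    have hc : c = a - 1 ∨ c = a + (n : ZMod (2*n)) := by
      rcases hac with h | h | h
      · exact absurd (by linear_combination h) hcb
      · left; linear_combination h
      · right; linear_combination h
    have hd : d = a + 2 ∨ d = a + 1 + (n : ZMod (2*n)) := by
      rcases hdb with h | h | h
      · exact absurd (by linear_combination -h) hda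
      · left; linear_combination -h
      · right; linear_combination (neg_n (n := n)) - h
    rcases hc with hc | hc
    · exfalso
      rcases hd with hd | hd
      · refine not_D_three hn ?_
        have : d - c = 3 := by rw [hc, hd]; ring
        rwa [this] at hcd
      · refine not_D_n_add_two hn ?_
        have : d - c = (n : ZMod (2*n)) + 2 := by rw [hc, hd]; ring
        rwa [this] at hcd
    · exact hc
  have e1 := key c d hcb hda h1 h2 h3
  have e2 := key c' d' hc'b hd'a h4 h5 h6
  exact hcc' (e1.trans e2.symm)

end Qlem

lemma mem_autSubgroup_iff {V : Type*} (G : SimpleGraph V) (σ : Equiv.Perm V) :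
    σ ∈ G.autSubgroup ↔ ∀ a b, G.Adj (σ a) (σ b) ↔ G.Adj a b := Iff.rfl

/-- the permutation associated to a dihedral group element -/
def toPerm (n : ℕ) : DihedralGroup (2*n) → Equiv.Perm (ZMod (2*n))
  | .r i => Equiv.subRight i
  | .sr i => Equiv.subLeft i

@[simp] lemma toPerm_r (i x : ZMod (2*n)) : toPerm n (.r i) x = x - i := rfl
@[simp] lemma toPerm_sr (i x : ZMod (2*n)) : toPerm n (.sr i) x = i - x := rfl

section Hom
variable (hn : 4 ≤ n)
include hn

lemma toPerm_mem (x : DihedralGroup (2*n)) :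
    toPerm n x ∈ (mobiusLadder n).autSubgroup := by
  rw [mem_autSubgroup_iff]
  intro a b
  cases x with
  | r i =>
    rw [adj_iff hn, adj_iff hn, toPerm_r, toPerm_r,
      show (b - i) - (a - i) = b - a by ring]
  | sr i =>
    rw [adj_iff hn, adj_iff hn, toPerm_sr, toPerm_sr,
      show (i - b) - (i - a) = -(b - a) by ring, D_neg_iff hn]

/-- the monoid hom from the dihedral group to the automorphism group -/
def phi : DihedralGroup (2*n) →* ((mobiusLadder n).autSubgroup) where
  toFun x := ⟨toPerm n x, toPerm_mem hn x⟩
  map_one' := by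
    refine Subtype.ext (Equiv.ext fun z => ?_)
    rw [DihedralGroup.one_def]
    show z - 0 = z
    ring
  map_mul' := by
    rintro (i | i) (j | j) <;>
      refine Subtype.ext (Equiv.ext fun z => ?_) <;>
      simp only [Subgroup.coe_mul, Equiv.Perm.mul_apply]
    · show z - (i + j) = (z - j) - i; ring
    · show (j - i) - z = (j - z) - i; ring
    · show (i + j) - z = i - (z - j); ring
    · show z - (j - i) = i - (j - z); ring

lemma phi_injective : Function.Injective (phi hn) := by
  rintro (i | i) (j | j) h <;>
      have hp := congrArg Subtype.val h <;>
      simp only [phi, MonoidHom.coe_mk, OneHom.coe_mk] at hp <;>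
      have h0 := congrArg (fun e : Equiv.Perm (ZMod (2*n)) => e 0) hp <;>
      have h1 := congrArg (fun e : Equiv.Perm (ZMod (2*n)) => e 1) hp <;>
      simp only [toPerm_r, toPerm_sr] at h0 h1
  · have : i = j := by
      have h0' : (0 : ZMod (2*n)) - i = 0 - j := h0
      linear_combination -h0'
    rw [this]
  · exfalso
    have h0' : (0 : ZMod (2*n)) - i = j - 0 := h0
    have h1' : (1 : ZMod (2*n)) - i = j - 1 := h1
    exact two_ne_zero' hn (by linear_combination h1' - h0')
  · exfalso
    have h0' : i - (0 : ZMod (2*n)) = 0 - j := h0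
    have h1' : i - (1 : ZMod (2*n)) = 1 - j := h1
    exact two_ne_zero' hn (by linear_combination h0' - h1')
  · have : i = j := by
      have h0' : i - (0 : ZMod (2*n)) = j - 0 := h0
      linear_combination h0'
    rw [this]

lemma Q_map (σ : Equiv.Perm (ZMod (2*n))) (hσ : σ ∈ (mobiusLadder n).autSubgroup)
    {a b : ZMod (2*n)} (h : Q n a b) : Q n (σ a) (σ b) := by
  obtain ⟨c, c', d, d', hcc', hcb, hc'b, hda, hd'a, h1, h2, h3, h4, h5, h6⟩ := h
  rw [mem_autSubgroup_iff] at hσ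
  exact ⟨σ c, σ c', σ d, σ d', σ.injective.ne hcc', σ.injective.ne hcb,
    σ.injective.ne hc'b, σ.injective.ne hda, σ.injective.ne hd'a,
    (hσ _ _).mpr h1, (hσ _ _).mpr h2, (hσ _ _).mpr h3,
    (hσ _ _).mpr h4, (hσ _ _).mpr h5, (hσ _ _).mpr h6⟩

lemma step_cases (σ : Equiv.Perm (ZMod (2*n))) (hσ : σ ∈ (mobiusLadder n).autSubgroup)
    (i : ZMod (2*n)) : σ (i + 1) = σ i + 1 ∨ σ (i + 1) = σ i - 1 := by
  have hadj : (mobiusLadder n).Adj i (i+1) := by rw [adj_iff hn]; left; ring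
  have h2 : (mobiusLadder n).Adj (σ i) (σ (i+1)) := ((hσ : ∀ a b, _) i (i+1)).mpr hadj
  rw [adj_iff hn] at h2
  rcases h2 with h | h | h
  · left; linear_combination h
  · right; linear_combination h
  · exfalso
    have hQ : Q n (σ i) (σ (i+1)) := Q_of_rung hn h
    have hQ' : Q n i (i+1) := by
      have hmem : σ⁻¹ ∈ (mobiusLadder n).autSubgroup :=
        (mobiusLadder n).autSubgroup.inv_mem hσ
      have := Q_map hn σ⁻¹ hmem hQ
      simpa using this
    exact not_Q_cycle hn i hQ'

lemma formula (σ : Equiv.Perm (ZMod (2*n))) (e : ZMod (2*n))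
    (hstep : ∀ i, σ (i + 1) = σ i + e) : ∀ x, σ x = σ 0 + e * x := by
  haveI : NeZero (2*n) := ⟨by omega⟩
  have key2 : ∀ k : ℕ, σ (k : ZMod (2*n)) = σ 0 + e * k := by
    intro k; induction k with
    | zero => simp
    | succ m ih =>
      have h1 : ((m+1 : ℕ) : ZMod (2*n)) = ((m : ℕ) : ZMod (2*n)) + 1 := by push_cast; ring
      rw [h1, hstep, ih]; push_cast; ring
  intro x
  obtain ⟨k, rfl⟩ := ZMod.natCast_rightInverse.surjective x
  exact key2 k

lemma exists_form (σ : Equiv.Perm (ZMod (2*n))) (hσ : σ ∈ (mobiusLadder n).autSubgroup) :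
    (∀ x, σ x = σ 0 + x) ∨ (∀ x, σ x = σ 0 - x) := by
  haveI : NeZero (2*n) := ⟨by omega⟩
  have hstep := step_cases hn σ hσ
  have h2 : (2 : ZMod (2*n)) ≠ 0 := two_ne_zero' hn
  rcases hstep 0 with h0 | h0
  · left
    have key : ∀ k : ℕ, σ ((k : ZMod (2*n)) + 1) = σ (k : ZMod (2*n)) + 1 := by
      intro k; induction k with
      | zero => simpa using h0
      | succ m ih =>
        rcases hstep ((m+1 : ℕ) : ZMod (2*n)) with h | h
        · exact h
        · exfalso
          have hc : ((m+1 : ℕ) : ZMod (2*n)) = ((m : ℕ) : ZMod (2*n)) + 1 := by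
            push_cast; ring
          have heq : σ (((m+1 : ℕ) : ZMod (2*n)) + 1) = σ ((m : ℕ) : ZMod (2*n)) := by
            rw [h, hc, ih]; ring
          have := σ.injective heq
          rw [hc] at this
          exact h2 (by linear_combination this)
    have hstep1 : ∀ i, σ (i + 1) = σ i + 1 := by
      intro i
      obtain ⟨k, rfl⟩ := ZMod.natCast_rightInverse.surjective i
      exact key k
    intro x
    have := formula hn σ 1 hstep1 x
    rw [this]; ring
  · right
    have key : ∀ k : ℕ, σ ((k : ZMod (2*n)) + 1) = σ (k : ZMod (2*n)) - 1 := by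
      intro k; induction k with
      | zero => simpa using h0
      | succ m ih =>
        rcases hstep ((m+1 : ℕ) : ZMod (2*n)) with h | h
        · exfalso
          have hc : ((m+1 : ℕ) : ZMod (2*n)) = ((m : ℕ) : ZMod (2*n)) + 1 := by
            push_cast; ring
          have heq : σ (((m+1 : ℕ) : ZMod (2*n)) + 1) = σ ((m : ℕ) : ZMod (2*n)) := by
            rw [h, hc, ih]; ring
          have := σ.injective heq
          rw [hc] at this
          exact h2 (by linear_combination this)
        · exact h
    have hstep1 : ∀ i, σ (i + 1) = σ i + (-1) := by
      intro i
      obtain ⟨k, rfl⟩ := ZMod.natCast_rightInverse.surjective i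
      have := key k; rw [this]; ring
    intro x
    have := formula hn σ (-1) hstep1 x
    rw [this]; ring

lemma phi_surjective : Function.Surjective (phi hn) := by
  rintro ⟨σ, hσ⟩
  rcases exists_form hn σ hσ with h | h
  · refine ⟨.r (-(σ 0)), Subtype.ext (Equiv.ext fun x => ?_)⟩
    show x - (-(σ 0)) = σ x
    rw [h x]; ring
  · refine ⟨.sr (σ 0), Subtype.ext (Equiv.ext fun x => ?_)⟩
    show σ 0 - x = σ x
    rw [h x]

end Hom
end MobiusAux

/-- For `n ≥ 4`, the automorphism group of the Möbius ladder `Mₙ` is isomorphic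
to the dihedral group of order `4n`. -/
theorem mobiusLadder_autGroup_iso_dihedral (n : ℕ) (hn : 4 ≤ n) :
    Nonempty (↥((mobiusLadder n).autSubgroup) ≃* DihedralGroup (2 * n)) := by
  exact ⟨(MulEquiv.ofBijective (MobiusAux.phi hn)
    ⟨MobiusAux.phi_injective hn, MobiusAux.phi_surjective hn⟩).symm⟩
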